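/- arXiv:2311.02109 — 2 statements merged into one kernel-verified Lean document; each statement's English description precedes it below -/
import Mathlib

section
/- Let G be a connected graph in which every vertex that is not a cutvertex is a leaf (has degree 1), and suppose G contains an induced odd cycle x_1, …, x_r. Then for each i there exists a vertex y_i adjacent to x_i with no path from y_i to x_{i+1} in G − x_i, and the vertices x_1, …, x_r, y_1, …, y_r induce a subgraph isomorphic to the corona product of the odd cycle C_r with a point. -/
open Finset

/-- A move in the graph grabbing game: remove `v` from the remaining set `s`,
keeping the remaining vertices inducing a connected subgraph (or empty). -/
def legalMove {V : Type} [DecidableEq V] (G : SimpleGraph V) (s : Finset V) (v : V) : Prop :=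
  v ∈ s ∧ (s.erase v = ∅ ∨ (G.induce ((s.erase v : Finset V) : Set V)).Connected)

/-- Optimal score of the player to move, computed with fuel `n`. -/
noncomputable def gval {V : Type} [DecidableEq V] (G : SimpleGraph V) (w : V → ℝ) :
    ℕ → Finset V → ℝ
  | 0, _ => 0
  | n + 1, s =>
      sSup {x : ℝ | ∃ v, legalMove G s v ∧
        x = w v + (∑ u ∈ s.erase v, w u) - gval G w n (s.erase v)}

/-- Optimal score of the player to move on remaining vertex set `s`. -/
noncomputable def gameValue {V : Type} [DecidableEq V] (G : SimpleGraph V) (w : V → ℝ)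
    (s : Finset V) : ℝ :=
  gval G w s.card s

/-- Alice (the first player) can guarantee at least half of the total weight. -/
def AliceWins {V : Type} [Fintype V] [DecidableEq V] (G : SimpleGraph V) (w : V → ℝ) : Prop :=
  (∑ v, w v) / 2 ≤ gameValue G w Finset.univ

/-- Bob (the second player) can guarantee strictly more than half of the total weight. -/
def BobWins {V : Type} [Fintype V] [DecidableEq V] (G : SimpleGraph V) (w : V → ℝ) : Prop :=
  gameValue G w Finset.univ < (∑ v, w v) / 2

/-- The cycle graph `C_r` on `ZMod r`. -/
def cycleG (r : ℕ) : SimpleGraph (ZMod r) where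
  Adj a b := a ≠ b ∧ (a = b + 1 ∨ b = a + 1)
  symm := by
    constructor
    intro a b h
    exact ⟨h.1.symm, h.2.symm⟩
  loopless := by
    constructor
    intro a h
    exact h.1 rfl

/-- The corona product of the cycle `C_r` with a point: cycle vertices `(i, false)`
and a pendant leaf `(i, true)` attached to each cycle vertex. -/
def corona (r : ℕ) : SimpleGraph (ZMod r × Bool) where
  Adj a b := a ≠ b ∧
    ((a.2 = false ∧ b.2 = false ∧ (a.1 = b.1 + 1 ∨ b.1 = a.1 + 1)) ∨ (a.2 ≠ b.2 ∧ a.1 = b.1))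
  symm := by
    constructor
    intro a b h
    obtain ⟨h1, h2⟩ := h
    refine ⟨h1.symm, ?_⟩
    rcases h2 with ⟨p, q, s⟩ | ⟨p, q⟩
    · exact Or.inl ⟨q, p, s.symm⟩
    · exact Or.inr ⟨p.symm, q.symm⟩
  loopless := by
    constructor
    intro a h
    exact h.1 rfl

/-- `G` contains an induced subgraph isomorphic to the corona product of an odd cycle
with a point. -/
def HasInducedCorona {V : Type} (G : SimpleGraph V) : Prop :=
  ∃ r : ℕ, Odd r ∧ 3 ≤ r ∧ ∃ f : ZMod r × Bool ↪ V,
    ∀ a b, (corona r).Adj a b ↔ G.Adj (f a) (f b)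


open SimpleGraph in
lemma reach_induce_of_walk {V : Type} {G : SimpleGraph V} {s : Set V} :
    ∀ {a b : V} (p : G.Walk a b), (∀ v ∈ p.support, v ∈ s) →
      ∀ (ha : a ∈ s) (hb : b ∈ s), (G.induce s).Reachable ⟨a, ha⟩ ⟨b, hb⟩ := by
  intro a b p
  induction p with
  | nil => intro _ ha hb; exact Reachable.refl _
  | @cons u v w h p ih =>
    intro hs ha hb
    have hc : v ∈ s := hs _ (by simp [Walk.support_cons])
    have hadj : (G.induce s).Adj ⟨u, ha⟩ ⟨v, hc⟩ := h
    exact hadj.reachable.trans (ih (fun z hz => hs z (by simp [hz])) hc hb)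

open SimpleGraph in
theorem stmt2' {V : Type} [Fintype V] [DecidableEq V] (G : SimpleGraph V) [DecidableRel G.Adj]
    (r : ℕ) (hconn : G.Connected)
    (hleaf : ∀ v : V, (G.induce ({v}ᶜ : Set V)).Connected → G.degree v = 1)
    (hr : 3 ≤ r) (x : ZMod r ↪ V)
    (hx : ∀ a b, (cycleG r).Adj a b ↔ G.Adj (x a) (x b)) :
    ∃ y : ZMod r → V,
      (∀ i, G.Adj (x i) (y i) ∧ ¬ ∃ p : G.Walk (y i) (x (i + 1)), x i ∉ p.support) ∧
      ∀ i j : ZMod r, (y i ≠ x j) ∧ (i ≠ j → y i ≠ y j) ∧ (G.Adj (y i) (x j) → j = i)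
        ∧ ¬ G.Adj (y i) (y j) := by
  haveI : NeZero r := ⟨by omega⟩
  have hkne : ∀ k : ℕ, 0 < k → k < r → (k : ZMod r) ≠ 0 := by
    intro k h1 h2 h
    have := ZMod.val_cast_of_lt h2
    rw [h, ZMod.val_zero] at this
    omega
  have h10 : (1 : ZMod r) ≠ 0 := by
    have := hkne 1 (by omega) (by omega); simpa using this
  have hss : ∀ j : ZMod r, j ≠ j + 1 := by
    intro j h
    exact h10 (by linear_combination -h)
  have hadj_succ : ∀ j : ZMod r, G.Adj (x j) (x (j + 1)) :=
    fun j => (hx _ _).mp ⟨hss j, Or.inr rfl⟩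
  -- chain lemma
  have hchain : ∀ (i : ZMod r) (k : ℕ), 0 < k → k < r →
      ∃ p : G.Walk (x (i + 1)) (x (i + (k : ZMod r))), x i ∉ p.support := by
    intro i k
    induction k with
    | zero => omega
    | succ k ih =>
      intro _ hlt
      by_cases hk : k = 0
      · subst hk
        have he0 : i + 1 = i + ((0 + 1 : ℕ) : ZMod r) := by push_cast; ring
        refine ⟨Walk.nil.copy rfl (congrArg x he0), ?_⟩
        rw [Walk.support_copy]
        simp only [Walk.support_nil, List.mem_singleton]
        intro h
        exact hss i (x.injective h)
      · obtain ⟨p, hp⟩ := ih (by omega) (by omega)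
        have he : (i + (k : ZMod r)) + 1 = i + ((k + 1 : ℕ) : ZMod r) := by push_cast; ring
        have hadj := hadj_succ (i + (k : ZMod r))
        refine ⟨(p.concat hadj).copy rfl (congrArg x he), ?_⟩
        rw [Walk.support_copy, Walk.support_concat]
        simp only [List.concat_eq_append, List.mem_append, List.mem_singleton]
        rintro (h | h)
        · exact hp h
        · have := x.injective h
          have h2 : ((k + 1 : ℕ) : ZMod r) = 0 := by push_cast at this ⊢; linear_combination -this
          exact hkne (k + 1) (by omega) hlt h2
  -- for any j ≠ i, x j is connected to x (i+1) avoiding x i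
  have hR : ∀ i j : ZMod r, j ≠ i → ∃ p : G.Walk (x j) (x (i + 1)), x i ∉ p.support := by
    intro i j hij
    have hpos : 0 < (j - i).val := by
      rcases Nat.eq_zero_or_pos (j - i).val with h | h
      · exact absurd (sub_eq_zero.mp ((ZMod.val_eq_zero _).mp h)) hij
      · exact h
    obtain ⟨p, hp⟩ := hchain i (j - i).val hpos (ZMod.val_lt _)
    have hval : i + (((j - i).val : ℕ) : ZMod r) = j := by
      rw [ZMod.natCast_rightInverse (j - i)]; ring
    exact ⟨(p.copy rfl (congrArg x hval)).reverse, by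
      rwa [Walk.support_reverse, List.mem_reverse, Walk.support_copy]⟩
  -- x i has degree at least 2, so G - x i is disconnected
  have hNotConn : ∀ i : ZMod r, ¬ (G.induce ({x i}ᶜ : Set V)).Connected := by
    intro i hc
    have hdeg := hleaf (x i) hc
    have hne : x (i + 1) ≠ x (i - 1) := by
      intro h
      have := x.injective h
      have h2 : ((2 : ℕ) : ZMod r) = 0 := by push_cast; linear_combination this
      exact hkne 2 (by omega) (by omega) h2
    have hm1 : x (i + 1) ∈ G.neighborFinset (x i) := by
      rw [SimpleGraph.mem_neighborFinset]; exact hadj_succ i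
    have hm2 : x (i - 1) ∈ G.neighborFinset (x i) := by
      rw [SimpleGraph.mem_neighborFinset]
      refine (hx i (i - 1)).mp ⟨?_, Or.inl (by ring)⟩
      intro h
      exact h10 (by linear_combination h)
    have hsub : ({x (i + 1), x (i - 1)} : Finset V) ⊆ G.neighborFinset (x i) := by
      intro v hv
      rcases Finset.mem_insert.mp hv with h | h
      · exact h ▸ hm1
      · exact (Finset.mem_singleton.mp h) ▸ hm2
    have hcard : 2 ≤ (G.neighborFinset (x i)).card := by
      calc 2 = ({x (i + 1), x (i - 1)} : Finset V).card := by
                rw [Finset.card_insert_of_notMem (by simpa using hne), Finset.card_singleton]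
        _ ≤ _ := Finset.card_le_card hsub
    have hd : (G.neighborFinset (x i)).card = 1 := hdeg
    omega
  -- the key existence of the pendant vertex
  have hspec : ∀ i : ZMod r, ∃ c, G.Adj (x i) c ∧
      ¬ ∃ p : G.Walk c (x (i + 1)), x i ∉ p.support := by
    intro i
    have hnc := hNotConn i
    have hne1 : x (i + 1) ∈ ({x i}ᶜ : Set V) := by
      simp only [Set.mem_compl_iff, Set.mem_singleton_iff]
      intro h; exact hss i (x.injective h).symm
    rw [SimpleGraph.connected_iff] at hnc
    push_neg at hnc
    have hnp : ¬ (G.induce ({x i}ᶜ : Set V)).Preconnected :=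
      fun hp => isEmpty_iff.mp (hnc hp) ⟨x (i + 1), hne1⟩
    simp only [SimpleGraph.Preconnected, not_forall] at hnp
    obtain ⟨a, b, hab⟩ := hnp
    have hz : ∃ z, z ≠ x i ∧ ¬ ∃ p : G.Walk z (x (i + 1)), x i ∉ p.support := by
      by_contra h
      push_neg at h
      obtain ⟨pa, hpa⟩ := h a.1 a.2
      obtain ⟨pb, hpb⟩ := h b.1 b.2
      apply hab
      have h1 := reach_induce_of_walk (s := ({x i}ᶜ : Set V)) (pa.append pb.reverse)
        (fun v hv => by
          rcases (Walk.mem_support_append_iff _ _).mp hv with h | h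
          · intro hvv; rw [Set.mem_singleton_iff] at hvv; subst hvv; exact hpa h
          · rw [Walk.support_reverse, List.mem_reverse] at h
            intro hvv; rw [Set.mem_singleton_iff] at hvv; subst hvv; exact hpb h)
        a.2 b.2
      exact h1
    obtain ⟨z, hz1, hz2⟩ := hz
    obtain ⟨p⟩ := hconn.preconnected z (x i)
    have hmem : x i ∈ p.support := p.end_mem_support
    have hcount := p.count_support_takeUntil_eq_one hmem
    obtain ⟨c, hadj, tail, heq⟩ := (p.takeUntil (x i) hmem).reverse.exists_eq_cons_of_ne
      (Ne.symm hz1)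
    have htail : x i ∉ tail.support := by
      intro hmem'
      have h2 : 2 ≤ ((p.takeUntil (x i) hmem).reverse.support.count (x i)) := by
        rw [heq, Walk.support_cons]
        have h3 : 0 < tail.support.count (x i) := List.count_pos_iff.mpr hmem'
        simp only [List.count_cons_self]
        omega
      rw [Walk.support_reverse, List.count_reverse] at h2
      omega
    refine ⟨c, hadj, ?_⟩
    rintro ⟨pc, hpc⟩
    apply hz2
    refine ⟨tail.reverse.append pc, ?_⟩
    rw [Walk.mem_support_append_iff]
    rintro (h | h)
    · rw [Walk.support_reverse, List.mem_reverse] at h; exact htail h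
    · exact hpc h
  choose y hy1 hy2 using hspec
  -- y i is distinct from all x j
  have hyx : ∀ i j : ZMod r, y i ≠ x j := by
    intro i j
    by_cases hij : j = i
    · subst hij; exact (hy1 _).ne'
    · intro he
      apply hy2 i
      obtain ⟨p, hp⟩ := hR i j hij
      exact ⟨p.copy he.symm rfl, by rwa [Walk.support_copy]⟩
  have hyadjx : ∀ i j : ZMod r, G.Adj (y i) (x j) → j = i := by
    intro i j hadj
    by_contra hij
    apply hy2 i
    obtain ⟨p, hp⟩ := hR i j hij
    refine ⟨Walk.cons hadj p, ?_⟩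
    rw [Walk.support_cons, List.mem_cons]
    rintro (h | h)
    · exact hyx i i h.symm
    · exact hp h
  have hyy : ∀ i j : ZMod r, i ≠ j → y i ≠ y j := by
    intro i j hij he
    exact hij (hyadjx i j (he ▸ (hy1 j).symm)).symm
  have hynadjy : ∀ i j : ZMod r, ¬ G.Adj (y i) (y j) := by
    intro i j hadj
    have hij : i ≠ j := by rintro rfl; exact G.irrefl hadj
    apply hy2 i
    obtain ⟨p, hp⟩ := hR i j (Ne.symm hij)
    refine ⟨Walk.cons hadj (Walk.cons (hy1 j).symm p), ?_⟩
    rw [Walk.support_cons, Walk.support_cons, List.mem_cons, List.mem_cons]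
    rintro (h | h | h)
    · exact hyx i i h.symm
    · exact hyx j i h.symm
    · exact hp h
  exact ⟨y, fun i => ⟨hy1 i, hy2 i⟩,
    fun i j => ⟨hyx i j, hyy i j, hyadjx i j, hynadjy i j⟩⟩


theorem stmt2 {V : Type} [Fintype V] [DecidableEq V] (G : SimpleGraph V) [DecidableRel G.Adj]
    (hconn : G.Connected)
    (hleaf : ∀ v : V, (G.induce ({v}ᶜ : Set V)).Connected → G.degree v = 1)
    (r : ℕ) (hodd : Odd r) (hr : 3 ≤ r) (x : ZMod r ↪ V)
    (hx : ∀ a b, (cycleG r).Adj a b ↔ G.Adj (x a) (x b)) :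
    ∃ y : ZMod r → V,
      (∀ i, G.Adj (x i) (y i) ∧ ¬ ∃ p : G.Walk (y i) (x (i + 1)), x i ∉ p.support) ∧
      ∃ f : ZMod r × Bool ↪ V, (∀ i, f (i, false) = x i ∧ f (i, true) = y i) ∧
        ∀ a b, (corona r).Adj a b ↔ G.Adj (f a) (f b) := by
  obtain ⟨y, hy, hprops⟩ := stmt2' G r hconn hleaf hr x hx
  have hyx : ∀ i j : ZMod r, y i ≠ x j := fun i j => (hprops i j).1
  have hyy : ∀ i j : ZMod r, i ≠ j → y i ≠ y j := fun i j => (hprops i j).2.1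
  have hyadjx : ∀ i j : ZMod r, G.Adj (y i) (x j) → j = i := fun i j => (hprops i j).2.2.1
  have hynadjy : ∀ i j : ZMod r, ¬ G.Adj (y i) (y j) := fun i j => (hprops i j).2.2.2
  refine ⟨y, hy, ⟨⟨fun ab => cond ab.2 (y ab.1) (x ab.1), ?_⟩, fun i => ⟨rfl, rfl⟩, ?_⟩⟩
  · rintro ⟨i, bi⟩ ⟨j, bj⟩ h
    cases bi <;> cases bj <;> simp only [cond_true, cond_false] at h
    · simp [x.injective h]
    · exact absurd h.symm (hyx j i)
    · exact absurd h (hyx i j)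
    · have hij : i = j := by
        by_contra hij
        exact hyy i j hij h
      simp [hij]
  · rintro ⟨i, bi⟩ ⟨j, bj⟩
    cases bi <;> cases bj
    · show (_ ≠ _ ∧ _) ↔ G.Adj (x i) (x j)
      constructor
      · rintro ⟨hne, ⟨-, -, hor⟩ | ⟨hb, -⟩⟩
        · exact (hx i j).mp ⟨fun hij => hne (by rw [hij]), hor⟩
        · exact absurd rfl hb
      · intro h
        obtain ⟨hne, hor⟩ := (hx i j).mpr h
        exact ⟨fun hp => hne (congrArg Prod.fst hp), Or.inl ⟨rfl, rfl, hor⟩⟩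
    · show (_ ≠ _ ∧ _) ↔ G.Adj (x i) (y j)
      constructor
      · rintro ⟨-, ⟨-, hb, -⟩ | ⟨-, hij⟩⟩
        · exact absurd hb (by simp)
        · cases hij
          exact (hy _).1
      · intro h
        have hij : i = j := hyadjx j i h.symm
        cases hij
        exact ⟨by simp, Or.inr ⟨by simp, rfl⟩⟩
    · show (_ ≠ _ ∧ _) ↔ G.Adj (y i) (x j)
      constructor
      · rintro ⟨-, ⟨hb, -, -⟩ | ⟨-, hij⟩⟩
        · exact absurd hb (by simp)
        · cases hij
          exact (hy _).1.symm
      · intro h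
        have hij : j = i := hyadjx i j h
        subst hij
        exact ⟨by simp, Or.inr ⟨by simp, rfl⟩⟩
    · show (_ ≠ _ ∧ _) ↔ G.Adj (y i) (y j)
      constructor
      · rintro ⟨-, ⟨hb, -, -⟩ | ⟨hb, -⟩⟩
        · exact absurd hb (by simp)
        · exact absurd rfl hb
      · intro h
        exact absurd h (hynadjy i j)
end

section
/- Let G be a connected even-order graph with weights in {0,1} on which Bob has a winning strategy, and suppose G is minimal with this property under vertex deletion (no connected even-order induced subgraph obtained by deleting vertices admits a {0,1}-weighting on which Bob wins). Then every vertex of G that is not a cutvertex is a leaf of weight 0. -/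
open Finset

namespace StmtAux

variable {V : Type} [DecidableEq V]

/-- The set of values of legal moves is finite. -/
lemma valset_finite [Fintype V] (G : SimpleGraph V) (w : V → ℝ) (n : ℕ) (s : Finset V) :
    {x : ℝ | ∃ v, legalMove G s v ∧
        x = w v + (∑ u ∈ s.erase v, w u) - gval G w n (s.erase v)}.Finite := by
  apply Set.Finite.subset (Set.finite_range
    (fun v : V => w v + (∑ u ∈ s.erase v, w u) - gval G w n (s.erase v)))
  rintro x ⟨v, _, rfl⟩
  exact ⟨v, rfl⟩

/-- Iso between induced-of-induced and induced on the image. -/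
lemma connected_induce_coe (G : SimpleGraph V) (A : Set V) (r : Finset ↥A) :
    ((G.induce A).induce (↑r : Set ↥A)).Connected ↔
      (G.induce ((r.map ⟨Subtype.val, Subtype.val_injective⟩ : Finset V) : Set V)).Connected := by
  have hmem : ∀ c : V, c ∈ r.map ⟨Subtype.val, Subtype.val_injective⟩ → c ∈ A := by
    intro c hc
    rw [Finset.mem_map] at hc
    obtain ⟨b, _, rfl⟩ := hc
    exact b.2
  refine SimpleGraph.Iso.connected_iff (G := (G.induce A).induce (↑r : Set ↥A)) ?_
  refine ⟨⟨fun b => ⟨(b : ↥A), ?_⟩, fun c => ⟨⟨(c : V), hmem _ c.2⟩, ?_⟩, ?_, ?_⟩, ?_⟩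
  · exact Finset.mem_coe.mpr (Finset.mem_map_of_mem _ (Finset.mem_coe.mp b.2))
  · obtain ⟨b, hb, hbc⟩ := Finset.mem_map.mp (Finset.mem_coe.mp c.2)
    have hb' : b = (⟨(c : V), hmem _ c.2⟩ : ↥A) := Subtype.ext hbc
    exact Finset.mem_coe.mpr (hb' ▸ hb)
  · intro b; apply Subtype.ext; apply Subtype.ext; rfl
  · intro c; apply Subtype.ext; rfl
  · intro a b; exact Iff.rfl

/-- `gval` on an induced subgraph equals `gval` on the big graph. -/
lemma gval_induce (G : SimpleGraph V) (w : V → ℝ) (A : Set V) :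
    ∀ (n : ℕ) (t : Finset ↥A),
      gval (G.induce A) (fun x => w ↑x) n t
        = gval G w n (t.map ⟨Subtype.val, Subtype.val_injective⟩) := by
  intro n
  induction n with
  | zero => intro t; rfl
  | succ n ih =>
    intro t
    show sSup _ = sSup _
    congr 1
    ext x
    simp only [Set.mem_setOf_eq]
    have hme : ∀ v : ↥A,
        (t.map ⟨Subtype.val, Subtype.val_injective⟩).erase (v : V)
          = (t.erase v).map ⟨Subtype.val, Subtype.val_injective⟩ := by
      intro v; rw [Finset.map_erase]; rfl
    constructor
    · rintro ⟨v, ⟨hv1, hv2⟩, rfl⟩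
      refine ⟨↑v, ⟨Finset.mem_map_of_mem _ hv1, ?_⟩, ?_⟩
      · rw [hme v]
        rcases hv2 with h | h
        · left; rw [h]; rfl
        · right; exact (connected_induce_coe G A _).mp h
      · rw [hme v, Finset.sum_map, ih]
        rfl
    · rintro ⟨v, ⟨hv1, hv2⟩, rfl⟩
      rw [Finset.mem_map] at hv1
      obtain ⟨b, hb, rfl⟩ := hv1
      simp only [Function.Embedding.coeFn_mk] at hv2 ⊢
      refine ⟨b, ⟨hb, ?_⟩, ?_⟩
      · rw [hme b] at hv2
        rcases hv2 with h | h
        · left; exact Finset.map_eq_empty.mp h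
        · right; exact (connected_induce_coe G A _).mpr h
      · rw [hme b, Finset.sum_map, ih]
        rfl

/-- Adding a vertex adjacent to a vertex of a connected induced subgraph keeps it
connected. -/
lemma connected_insert (G : SimpleGraph V) (t : Finset V)
    (ht : (G.induce (↑t : Set V)).Connected) (a x : V) (hx : x ∈ t) (hax : G.Adj a x) :
    (G.induce (↑(insert a t) : Set V)).Connected := by
  have hxmem : x ∈ (↑(insert a t) : Set V) := by
    simp [hx]
  rw [SimpleGraph.connected_iff_exists_forall_reachable]
  refine ⟨⟨x, hxmem⟩, ?_⟩
  intro c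
  let f : G.induce (↑t : Set V) →g G.induce (↑(insert a t) : Set V) :=
    ⟨fun b => ⟨(b : V), by simpa using Or.inr (Finset.mem_coe.mp b.2)⟩, fun hadj => hadj⟩
  rcases (show (c : V) = a ∨ (c : V) ∈ t by simpa using c.2) with hc | hc
  · refine SimpleGraph.Adj.reachable ?_
    show G.Adj x (c : V)
    rw [hc]
    exact hax.symm
  · have hr := (ht.preconnected ⟨x, hx⟩ ⟨(c : V), hc⟩).map f
    exact hr

end StmtAux

theorem stmt4 {V : Type} [Fintype V] [DecidableEq V] (G : SimpleGraph V) [DecidableRel G.Adj]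
    (w : V → ℝ) (hw : ∀ v, w v = 0 ∨ w v = 1)
    (hconn : G.Connected) (heven : Even (Fintype.card V))
    (hBob : BobWins G w)
    (hmin : ∀ s : Finset V, s ⊂ Finset.univ → Even s.card →
      (G.induce ((s : Finset V) : Set V)).Connected →
      ∀ w' : ((s : Finset V) : Set V) → ℝ, (∀ x, w' x = 0 ∨ w' x = 1) →
        ¬ BobWins (G.induce ((s : Finset V) : Set V)) w') :
    ∀ v : V, (G.induce ({v}ᶜ : Set V)).Connected → G.degree v = 1 ∧ w v = 0 := by
  classical
  have hw0 : ∀ y, 0 ≤ w y := by intro y; rcases hw y with h | h <;> rw [h] <;> norm_num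
  have hw1 : ∀ y, w y ≤ 1 := by intro y; rcases hw y with h | h <;> rw [h] <;> norm_num
  have hT0 : 0 ≤ ∑ y, w y := Finset.sum_nonneg fun y _ => hw0 y
  -- minimality in terms of `gval`
  have hmin' : ∀ s : Finset V, s ⊂ Finset.univ → Even s.card →
      (G.induce ((s : Finset V) : Set V)).Connected →
      (∑ a ∈ s, w a) / 2 ≤ gval G w s.card s := by
    intro s h1 h2 h3
    have h5 := hmin s h1 h2 h3 (fun x => w ↑x) (fun x => hw ↑x)
    simp only [BobWins, gameValue, not_lt] at h5
    have hmapuniv : (Finset.univ : Finset ((s : Set V) : Type)).map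
        ⟨Subtype.val, Subtype.val_injective⟩ = s := by
      ext a
      simp only [Finset.mem_map, Finset.mem_univ, true_and, Function.Embedding.coeFn_mk]
      constructor
      · rintro ⟨b, rfl⟩; exact b.2
      · intro ha; exact ⟨⟨a, ha⟩, rfl⟩
    have hcard : (Finset.univ : Finset ((s : Set V) : Type)).card = s.card := by
      rw [Finset.card_univ]
      convert Fintype.card_coe s
      exact Finset.mem_coe
    have hsum : (∑ x : ((s : Set V) : Type), w ↑x) = ∑ a ∈ s, w a :=
      Finset.sum_finset_coe w s
    rw [StmtAux.gval_induce G w (↑s), hmapuniv, hcard, hsum] at h5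
    exact h5
  -- the value of the game after one move is bounded
  have hBbound : ∀ y : V, gval G w (Finset.univ.erase y).card (Finset.univ.erase y)
      ≤ ((∑ u ∈ Finset.univ.erase y, w u) + 1) / 2 := by
    intro y
    have hSH0 : 0 ≤ ∑ u ∈ Finset.univ.erase y, w u :=
      Finset.sum_nonneg fun u _ => hw0 u
    cases hc : (Finset.univ.erase y).card with
    | zero =>
      show (0 : ℝ) ≤ _
      linarith
    | succ m =>
      rw [gval]
      apply Real.sSup_le
      · rintro x ⟨u, ⟨hu1, hu2⟩, rfl⟩
        have hsum : (∑ a ∈ (Finset.univ.erase y).erase u, w a) + w u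
            = ∑ u ∈ Finset.univ.erase y, w u := Finset.sum_erase_add _ _ hu1
        have hcardsu : ((Finset.univ.erase y).erase u).card = m := by
          rw [Finset.card_erase_of_mem hu1, hc]
          omega
        have hg : (∑ a ∈ (Finset.univ.erase y).erase u, w a) / 2
            ≤ gval G w m ((Finset.univ.erase y).erase u) := by
          rcases Finset.eq_empty_or_nonempty ((Finset.univ.erase y).erase u) with he | hne
          · rw [he] at hcardsu ⊢
            simp only [Finset.card_empty] at hcardsu
            rw [← hcardsu]
            show (0:ℝ)/2 ≤ (0:ℝ)
            norm_num
          · have hconn' : (G.induce (((Finset.univ.erase y).erase u : Finset V) : Set V)).Connected := by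
              rcases hu2 with h | h
              · exact absurd h (Finset.nonempty_iff_ne_empty.mp hne)
              · exact h
            have hss : (Finset.univ.erase y).erase u ⊂ Finset.univ := by
              rw [Finset.ssubset_univ_iff]
              intro hEq
              have : y ∈ (Finset.univ.erase y).erase u := by rw [hEq]; exact Finset.mem_univ y
              exact (Finset.mem_erase.mp (Finset.mem_erase.mp this).2).1 rfl
            have hEvensu : Even ((Finset.univ.erase y).erase u).card := by
              rw [hcardsu]
              have hm2 : Fintype.card V = m + 2 := by
                rw [← Finset.card_univ, ← Finset.card_erase_add_one (Finset.mem_univ y), hc]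
              obtain ⟨k, hk⟩ := heven
              exact ⟨k - 1, by omega⟩
            have := hmin' _ hss hEvensu hconn'
            rw [hcardsu] at this
            exact this
        have := hw1 u
        linarith
      · linarith
  -- any legal opening move has weight 0
  have hNE : (Finset.univ : Finset V).Nonempty → Fintype.card V ≠ 1 := by
    intro _ h1
    rw [h1] at heven
    exact (Nat.not_even_iff_odd.mpr odd_one) heven
  have key0 : ∀ y : V, legalMove G Finset.univ y → w y = 0 := by
    intro y hy
    rcases hw y with h | h
    · exact h
    · exfalso
      have hyu : y ∈ (Finset.univ : Finset V) := hy.1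
      have hNsucc : (Finset.univ : Finset V).card = (Finset.univ.erase y).card + 1 :=
        (Finset.card_erase_add_one hyu).symm
      have hBob' : gval G w (Finset.univ : Finset V).card Finset.univ < (∑ v, w v) / 2 := hBob
      rw [hNsucc, gval] at hBob'
      have hA := le_csSup (StmtAux.valset_finite G w (Finset.univ.erase y).card
        (Finset.univ : Finset V)).bddAbove ⟨y, hy, rfl⟩
      have hsum : w y + ∑ u ∈ Finset.univ.erase y, w u = ∑ v, w v :=
        Finset.add_sum_erase _ w hyu
      have hB := hBbound y
      rw [h] at hA hsum
      linarith
  -- main argument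
  intro v hv
  have hlegalv : legalMove G Finset.univ v := by
    refine ⟨Finset.mem_univ v, Or.inr ?_⟩
    have hset : ((Finset.univ.erase v : Finset V) : Set V) = ({v}ᶜ : Set V) := by
      rw [Finset.coe_erase, Finset.coe_univ, ← Set.compl_eq_univ_diff]
    rw [hset]
    exact hv
  have hwv : w v = 0 := key0 v hlegalv
  refine ⟨?_, hwv⟩
  have hvu : v ∈ (Finset.univ : Finset V) := Finset.mem_univ v
  have hNsucc : (Finset.univ : Finset V).card = (Finset.univ.erase v).card + 1 :=
    (Finset.card_erase_add_one hvu).symm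
  have hBob' : gval G w (Finset.univ : Finset V).card Finset.univ < (∑ v, w v) / 2 := hBob
  rw [hNsucc, gval] at hBob'
  have hA := le_csSup (StmtAux.valset_finite G w (Finset.univ.erase v).card
    (Finset.univ : Finset V)).bddAbove ⟨v, hlegalv, rfl⟩
  have hsumH : ∑ u ∈ Finset.univ.erase v, w u = ∑ u, w u := by
    have h2 : w v + ∑ u ∈ Finset.univ.erase v, w u = ∑ u, w u :=
      Finset.add_sum_erase _ w hvu
    rw [hwv] at h2
    linarith
  have hBgt : (∑ u, w u) / 2
      < gval G w (Finset.univ.erase v).card (Finset.univ.erase v) := by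
    rw [hwv, hsumH] at hA
    linarith
  obtain ⟨m, hm⟩ : ∃ m, (Finset.univ.erase v).card = m + 1 := by
    cases hc : (Finset.univ.erase v).card with
    | zero =>
      exfalso
      rw [hc] at hBgt
      have h0 : gval G w 0 (Finset.univ.erase v) = 0 := rfl
      rw [h0] at hBgt
      linarith
    | succ m => exact ⟨m, rfl⟩
  rw [hm, gval] at hBgt
  have hfin := StmtAux.valset_finite G w m (Finset.univ.erase v)
  have hne : {x : ℝ | ∃ u, legalMove G (Finset.univ.erase v) u ∧
      x = w u + (∑ a ∈ (Finset.univ.erase v).erase u, w a)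
        - gval G w m ((Finset.univ.erase v).erase u)}.Nonempty := by
    by_contra hcon
    rw [Set.not_nonempty_iff_eq_empty] at hcon
    rw [hcon, Real.sSup_empty] at hBgt
    linarith
  obtain ⟨u, ⟨hu1, hu2⟩, hEq⟩ := hne.csSup_mem hfin
  have husum : (∑ a ∈ (Finset.univ.erase v).erase u, w a) + w u
      = ∑ u ∈ Finset.univ.erase v, w u := Finset.sum_erase_add _ w hu1
  have hguB : gval G w m ((Finset.univ.erase v).erase u)
      < w u + (∑ a ∈ (Finset.univ.erase v).erase u, w a) - (∑ u, w u) / 2 := by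
    rw [hEq] at hBgt
    linarith
  have hvneu : v ≠ u := fun hh => (Finset.mem_erase.mp hu1).1 hh.symm
  rcases Finset.eq_empty_or_nonempty ((Finset.univ.erase v).erase u) with hsuE | hsuNE
  · -- two-vertex case
    have hHu : Finset.univ.erase v = {u} := by
      rcases (Finset.erase_eq_empty_iff _ _).mp hsuE with hh | hh
      · rw [hh] at hu1
        exact absurd hu1 (Finset.notMem_empty u)
      · exact hh
    have huniv2 : (Finset.univ : Finset V) = {v, u} := by
      ext z
      simp only [Finset.mem_univ, true_iff, Finset.mem_insert, Finset.mem_singleton]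
      by_cases hz : z = v
      · exact Or.inl hz
      · right
        have hzz : z ∈ Finset.univ.erase v := Finset.mem_erase.mpr ⟨hz, Finset.mem_univ z⟩
        rw [hHu] at hzz
        exact Finset.mem_singleton.mp hzz
    have hadj : G.Adj v u := by
      obtain ⟨p⟩ := hconn.preconnected v u
      have hnn : ¬ p.Nil := SimpleGraph.Walk.not_nil_of_ne hvneu
      have hadj0 : G.Adj v (p.getVert 1) := p.adj_snd hnn
      have hmem1 : p.getVert 1 ∈ (Finset.univ : Finset V) := Finset.mem_univ _
      rw [huniv2] at hmem1
      rcases Finset.mem_insert.mp hmem1 with hh | hh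
      · exact absurd hh.symm hadj0.ne
      · rw [Finset.mem_singleton] at hh
        rw [← hh]
        exact hadj0
    have hdeg : G.neighborFinset v = {u} := by
      ext z
      rw [SimpleGraph.mem_neighborFinset, Finset.mem_singleton]
      constructor
      · intro hz
        have hzz : z ∈ (Finset.univ : Finset V) := Finset.mem_univ z
        rw [huniv2] at hzz
        rcases Finset.mem_insert.mp hzz with hh | hh
        · exact absurd hh.symm hz.ne
        · exact Finset.mem_singleton.mp hh
      · rintro rfl
        exact hadj
    show (G.neighborFinset v).card = 1
    rw [hdeg]
    exact Finset.card_singleton u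
  · -- main case
    have hcardsu : ((Finset.univ.erase v).erase u).card = m := by
      rw [Finset.card_erase_of_mem hu1, hm]
      omega
    have hconnsu : (G.induce (((Finset.univ.erase v).erase u : Finset V) : Set V)).Connected := by
      rcases hu2 with hh | hh
      · exact absurd hh (Finset.nonempty_iff_ne_empty.mp hsuNE)
      · exact hh
    have hss : (Finset.univ.erase v).erase u ⊂ Finset.univ := by
      rw [Finset.ssubset_univ_iff]
      intro hEq2
      have hvin : v ∈ (Finset.univ.erase v).erase u := by rw [hEq2]; exact Finset.mem_univ v
      exact (Finset.mem_erase.mp (Finset.mem_erase.mp hvin).2).1 rfl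
    have hEvensu : Even ((Finset.univ.erase v).erase u).card := by
      rw [hcardsu]
      have hm2 : Fintype.card V = m + 2 := by
        rw [← Finset.card_univ, ← Finset.card_erase_add_one (Finset.mem_univ v), hm]
      obtain ⟨k, hk⟩ := heven
      exact ⟨k - 1, by omega⟩
    have hgmin := hmin' _ hss hEvensu hconnsu
    rw [hcardsu] at hgmin
    have hwu : w u = 1 := by
      rcases hw u with hh | hh
      · exfalso
        rw [hh] at hguB husum
        rw [hsumH] at husum
        linarith
      · exact hh
    have hnotconn : ¬ (G.induce ((Finset.univ.erase u : Finset V) : Set V)).Connected := by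
      intro hcu
      have h0 := key0 u ⟨Finset.mem_univ u, Or.inr hcu⟩
      rw [hwu] at h0
      norm_num at h0
    have hNv : ∀ x, G.Adj v x → x = u := by
      intro x hx
      by_contra hxu
      have hxv : x ≠ v := hx.ne'
      have hxsu : x ∈ (Finset.univ.erase v).erase u :=
        Finset.mem_erase.mpr ⟨hxu, Finset.mem_erase.mpr ⟨hxv, Finset.mem_univ x⟩⟩
      have hins : insert v ((Finset.univ.erase v).erase u) = Finset.univ.erase u := by
        ext z
        simp only [Finset.mem_insert, Finset.mem_erase, Finset.mem_univ, and_true]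
        constructor
        · rintro (rfl | ⟨h1, _⟩)
          · exact hvneu
          · exact h1
        · intro hz
          by_cases hzv : z = v
          · exact Or.inl hzv
          · exact Or.inr ⟨hz, hzv⟩
      have hconn2 := StmtAux.connected_insert G _ hconnsu v x hxsu hx
      rw [hins] at hconn2
      exact hnotconn hconn2
    have hadj : G.Adj v u := by
      obtain ⟨p⟩ := hconn.preconnected v u
      have hnn : ¬ p.Nil := SimpleGraph.Walk.not_nil_of_ne hvneu
      have hadj0 : G.Adj v (p.getVert 1) := p.adj_snd hnn
      rw [← hNv _ hadj0]
      exact hadj0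
    have hdeg : G.neighborFinset v = {u} := by
      ext z
      rw [SimpleGraph.mem_neighborFinset, Finset.mem_singleton]
      exact ⟨hNv z, fun hh => hh ▸ hadj⟩
    show (G.neighborFinset v).card = 1
    rw [hdeg]
    exact Finset.card_singleton u
end
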